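/- arXiv:2405.03597 — 2 statements merged into one kernel-verified Lean document; each statement's English description precedes it below -/
import Mathlib

section
/- Let L ≥ 1, T > 0, let g : ℝ → ℝ be square-integrable with autocorrelation G(τ) = ∫_ℝ g(t) g(t − τ) dt, and let s_0, …, s_{L−1} be mutually independent complex random variables with E[s_n] = 0 and E[|s_n|⁴] < ∞ for all n. Define χ_s(τ) = (Σ_{n=0}^{L−1} |s_n|²) · G(τ) and χ_c(τ) = Σ_{n=0}^{L−1} Σ_{m=0, m≠n}^{L−1} s_n · conj(s_m) · G(τ + (m − n)T). Then for every τ ∈ ℝ, E[χ_s(τ) · conj(χ_c(τ))] = 0; in particular, since E[χ_c(τ)] = 0, the random variables χ_s(τ) and χ_c(τ) are uncorrelated. -/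
open MeasureTheory ProbabilityTheory Complex Finset
open scoped ComplexConjugate ENNReal

/-- ae-congruence for `iIndepFun`. -/
lemma iIndepFun_congr_ae {Ω ι : Type*} [Countable ι] [MeasurableSpace Ω] {μ : Measure Ω}
    {β : ι → Type*} {m : ∀ i, MeasurableSpace (β i)} {f g : ∀ i, Ω → β i}
    (h : ∀ i, f i =ᵐ[μ] g i) (hf : iIndepFun f μ) : iIndepFun g μ := by
  rw [iIndepFun_iff_measure_inter_preimage_eq_mul] at hf ⊢
  intro S sets H
  have hpre : ∀ i, (g i ⁻¹' sets i : Set Ω) =ᵐ[μ] (f i ⁻¹' sets i : Set Ω) := by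
    intro i
    rw [Filter.eventuallyEq_set]
    filter_upwards [h i] with ω hω
    simp [Set.mem_preimage, hω]
  have h1 : μ (⋂ i ∈ S, g i ⁻¹' sets i) = μ (⋂ i ∈ S, f i ⁻¹' sets i) := by
    apply measure_congr
    rw [Filter.eventuallyEq_set]
    have : ∀ᵐ ω ∂μ, ∀ i ∈ S, (ω ∈ g i ⁻¹' sets i ↔ ω ∈ f i ⁻¹' sets i) := by
      rw [ae_all_iff]
      intro i
      rcases Classical.em (i ∈ S) with hi | hi
      · filter_upwards [h i] with ω hω _
        simp [Set.mem_preimage, hω]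
      · filter_upwards with ω hm
        exact absurd hm hi
    filter_upwards [this] with ω hω
    simp only [Set.mem_iInter]
    exact forall_congr' fun i => forall_congr' fun hi => hω i hi
  rw [h1, hf S H]
  exact Finset.prod_congr rfl fun i _ => (measure_congr (hpre i)).symm

/-- Complex version of `IndepFun.integral_mul`. -/
lemma ProbabilityTheory.IndepFun.integral_mul_complex {Ω : Type*} [MeasurableSpace Ω] {μ : Measure Ω}
    {X Y : Ω → ℂ} (h : IndepFun X Y μ) (hX : Integrable X μ) (hY : Integrable Y μ) :
    (∫ ω, X ω * Y ω ∂μ) = (∫ ω, X ω ∂μ) * ∫ ω, Y ω ∂μ := by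
  have hXY : Integrable (fun ω => X ω * Y ω) μ := h.integrable_mul hX hY
  have ha : Integrable (fun ω => (X ω).re) μ := by simpa using hX.re
  have hb : Integrable (fun ω => (X ω).im) μ := by simpa using hX.im
  have hc : Integrable (fun ω => (Y ω).re) μ := by simpa using hY.re
  have hd : Integrable (fun ω => (Y ω).im) μ := by simpa using hY.im
  have hre : Measurable fun z : ℂ => z.re := Complex.measurable_re
  have him : Measurable fun z : ℂ => z.im := Complex.measurable_im
  have iac : ∫ ω, (X ω).re * (Y ω).re ∂μ = (∫ ω, (X ω).re ∂μ) * ∫ ω, (Y ω).re ∂μ :=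
    (h.comp hre hre).integral_mul_eq_mul_integral ha.aestronglyMeasurable hc.aestronglyMeasurable
  have iad : ∫ ω, (X ω).re * (Y ω).im ∂μ = (∫ ω, (X ω).re ∂μ) * ∫ ω, (Y ω).im ∂μ :=
    (h.comp hre him).integral_mul_eq_mul_integral ha.aestronglyMeasurable hd.aestronglyMeasurable
  have ibc : ∫ ω, (X ω).im * (Y ω).re ∂μ = (∫ ω, (X ω).im ∂μ) * ∫ ω, (Y ω).re ∂μ :=
    (h.comp him hre).integral_mul_eq_mul_integral hb.aestronglyMeasurable hc.aestronglyMeasurable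
  have ibd : ∫ ω, (X ω).im * (Y ω).im ∂μ = (∫ ω, (X ω).im ∂μ) * ∫ ω, (Y ω).im ∂μ :=
    (h.comp him him).integral_mul_eq_mul_integral hb.aestronglyMeasurable hd.aestronglyMeasurable
  have jac : Integrable (fun ω => (X ω).re * (Y ω).re) μ := (h.comp hre hre).integrable_mul ha hc
  have jad : Integrable (fun ω => (X ω).re * (Y ω).im) μ := (h.comp hre him).integrable_mul ha hd
  have jbc : Integrable (fun ω => (X ω).im * (Y ω).re) μ := (h.comp him hre).integrable_mul hb hc
  have jbd : Integrable (fun ω => (X ω).im * (Y ω).im) μ := (h.comp him him).integrable_mul hb hd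
  apply Complex.ext
  · calc (∫ ω, X ω * Y ω ∂μ).re = ∫ ω, (X ω * Y ω).re ∂μ := by
          rw [← RCLike.re_to_complex, ← integral_re hXY]; rfl
      _ = ∫ ω, ((X ω).re * (Y ω).re - (X ω).im * (Y ω).im) ∂μ := by
          simp_rw [Complex.mul_re]
      _ = (∫ ω, (X ω).re ∂μ) * (∫ ω, (Y ω).re ∂μ)
            - (∫ ω, (X ω).im ∂μ) * (∫ ω, (Y ω).im ∂μ) := by
          rw [integral_sub jac jbd, iac, ibd]
      _ = ((∫ ω, X ω ∂μ) * ∫ ω, Y ω ∂μ).re := by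
          rw [Complex.mul_re]
          have e1 : (∫ ω, X ω ∂μ).re = ∫ ω, (X ω).re ∂μ := by
            rw [← RCLike.re_to_complex, ← integral_re hX]; rfl
          have e2 : (∫ ω, Y ω ∂μ).re = ∫ ω, (Y ω).re ∂μ := by
            rw [← RCLike.re_to_complex, ← integral_re hY]; rfl
          have e3 : (∫ ω, X ω ∂μ).im = ∫ ω, (X ω).im ∂μ := by
            rw [← RCLike.im_to_complex, ← integral_im hX]; rfl
          have e4 : (∫ ω, Y ω ∂μ).im = ∫ ω, (Y ω).im ∂μ := by
            rw [← RCLike.im_to_complex, ← integral_im hY]; rfl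
          rw [e1, e2, e3, e4]
  · calc (∫ ω, X ω * Y ω ∂μ).im = ∫ ω, (X ω * Y ω).im ∂μ := by
          rw [← RCLike.im_to_complex, ← integral_im hXY]; rfl
      _ = ∫ ω, ((X ω).re * (Y ω).im + (X ω).im * (Y ω).re) ∂μ := by
          simp_rw [Complex.mul_im]
      _ = (∫ ω, (X ω).re ∂μ) * (∫ ω, (Y ω).im ∂μ)
            + (∫ ω, (X ω).im ∂μ) * (∫ ω, (Y ω).re ∂μ) := by
          rw [integral_add jad jbc, iad, ibc]
      _ = ((∫ ω, X ω ∂μ) * ∫ ω, Y ω ∂μ).im := by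
          rw [Complex.mul_im]
          have e1 : (∫ ω, X ω ∂μ).re = ∫ ω, (X ω).re ∂μ := by
            rw [← RCLike.re_to_complex, ← integral_re hX]; rfl
          have e2 : (∫ ω, Y ω ∂μ).re = ∫ ω, (Y ω).re ∂μ := by
            rw [← RCLike.re_to_complex, ← integral_re hY]; rfl
          have e3 : (∫ ω, X ω ∂μ).im = ∫ ω, (X ω).im ∂μ := by
            rw [← RCLike.im_to_complex, ← integral_im hX]; rfl
          have e4 : (∫ ω, Y ω ∂μ).im = ∫ ω, (Y ω).im ∂μ := by
            rw [← RCLike.im_to_complex, ← integral_im hY]; rfl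
          rw [e1, e2, e3, e4]

/-- The self-ambiguity part `χ_s(τ)` and the cross-ambiguity part `χ_c(τ)` satisfy
`E[χ_s(τ) conj(χ_c(τ))] = 0`; in particular they are uncorrelated, i.e.
`E[χ_s conj(χ_c)] = E[χ_s] · conj(E[χ_c])`. -/
theorem statement_3 {Ω : Type*} [MeasurableSpace Ω] (μ : Measure Ω) [IsProbabilityMeasure μ]
    (L : ℕ) (hL : 1 ≤ L) (T : ℝ) (hT : 0 < T)
    (g : ℝ → ℝ) (hg : MemLp g 2 (volume : Measure ℝ))
    (G : ℝ → ℝ) (hG : ∀ τ, G τ = ∫ t : ℝ, g t * g (t - τ))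
    (s : Fin L → Ω → ℂ)
    (hind : iIndepFun s μ)
    (hmean : ∀ n, ∫ ω, s n ω ∂μ = 0)
    (h4 : ∀ n, MemLp (s n) 4 μ)
    (τ : ℝ)
    (χs : Ω → ℂ)
    (hχs : χs = fun ω => ((∑ n : Fin L, ‖s n ω‖ ^ 2 : ℝ) : ℂ) * (G τ : ℂ))
    (χc : Ω → ℂ)
    (hχc : χc = fun ω => ∑ n : Fin L, ∑ m ∈ Finset.univ.erase n,
        s n ω * conj (s m ω) * (G (τ + ((m : ℝ) - (n : ℝ)) * T) : ℂ)) :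
    (∫ ω, χs ω * conj (χc ω) ∂μ) = 0 ∧
    (∫ ω, χs ω * conj (χc ω) ∂μ) = (∫ ω, χs ω ∂μ) * conj (∫ ω, χc ω ∂μ) := by
  classical
  -- measurable modifications
  set t : Fin L → Ω → ℂ := fun i => ((h4 i).aestronglyMeasurable).mk (s i) with ht_def
  have hts : ∀ i, s i =ᵐ[μ] t i := fun i => ((h4 i).aestronglyMeasurable).ae_eq_mk
  have htm : ∀ i, Measurable (t i) :=
    fun i => ((h4 i).aestronglyMeasurable).stronglyMeasurable_mk.measurable
  have ht4 : ∀ i, MemLp (t i) 4 μ := fun i => (h4 i).ae_eq (hts i)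
  have htind : iIndepFun t μ := iIndepFun_congr_ae hts hind
  have htmean : ∀ n, ∫ ω, t n ω ∂μ = 0 := fun n => by
    rw [← integral_congr_ae (hts n)]; exact hmean n
  have mconj : Measurable fun z : ℂ => (starRingEnd ℂ) z := Complex.continuous_conj.measurable
  -- integrability facts
  have hti : ∀ i, Integrable (t i) μ := fun i => (ht4 i).integrable (by norm_num)
  have htconj : ∀ i, Integrable (fun ω => conj (t i ω)) μ := by
    intro i
    refine Integrable.mono' (hti i).norm ((mconj.comp (htm i)).aestronglyMeasurable) ?_
    filter_upwards with ω
    simp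
  have habs2 : ∀ i, Integrable (fun ω => ((‖t i ω‖ ^ 2 : ℝ) : ℂ)) μ := by
    intro i
    have h2 : Integrable (fun ω => ‖t i ω‖ ^ ((2:ℝ≥0∞).toReal)) μ :=
      ((ht4 i).mono_exponent (by norm_num)).integrable_norm_rpow (by norm_num) (by norm_num)
    have h2' : Integrable (fun ω => ‖t i ω‖ ^ 2) μ := by
      refine h2.congr ?_
      filter_upwards with ω
      rw [← Real.rpow_natCast ‖t i ω‖ 2]
      norm_num
    exact h2'.ofReal
  have hcube : ∀ (i : Fin L) (ϕ : ℂ → ℂ), Measurable ϕ →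
      (∀ z, ‖ϕ z‖ = ‖z‖) →
      Integrable (fun ω => ((‖t i ω‖ ^ 2 : ℝ) : ℂ) * ϕ (t i ω)) μ := by
    intro i ϕ hϕm hϕn
    have h3 : Integrable (fun ω => ‖t i ω‖ ^ ((3:ℝ≥0∞).toReal)) μ :=
      ((ht4 i).mono_exponent (by norm_num)).integrable_norm_rpow (by norm_num) (by norm_num)
    have hb : Integrable (fun ω => ‖t i ω‖ ^ 3) μ := by
      refine h3.congr ?_
      filter_upwards with ω
      rw [← Real.rpow_natCast ‖t i ω‖ 3]
      norm_num
    refine Integrable.mono' hb ?_ ?_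
    · exact ((Complex.measurable_ofReal.comp
        (((continuous_norm : Continuous fun z : ℂ => ‖z‖).measurable.comp (htm i)).pow_const 2)).mul
        (hϕm.comp (htm i))).aestronglyMeasurable
    · filter_upwards with ω
      simp only [norm_mul, Complex.norm_real, Real.norm_eq_abs, hϕn]
      rw [_root_.abs_of_nonneg (by positivity : (0:ℝ) ≤ ‖t i ω‖ ^ 2)]
      exact le_of_eq (by ring)
  -- key vanishing lemma
  have key : ∀ k n m : Fin L, n ≠ m →
      Integrable (fun ω => ((‖t k ω‖ ^ 2 : ℝ) : ℂ) * (conj (t n ω) * t m ω)) μ ∧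
      (∫ ω, ((‖t k ω‖ ^ 2 : ℝ) : ℂ) * (conj (t n ω) * t m ω) ∂μ) = 0 := by
    intro k n m hnm
    by_cases hkm : k = m
    · -- k = m : group (|t m|^2 * t m) and conj (t n)
      subst hkm
      have hnk : n ≠ k := hnm
      have hY : Integrable (fun ω => ((‖t k ω‖ ^ 2 : ℝ) : ℂ) * t k ω) μ :=
        hcube k id measurable_id (fun z => rfl)
      have hX : Integrable (fun ω => conj (t n ω)) μ := htconj n
      have hindXY : IndepFun (fun ω => conj (t n ω))
          (fun ω => ((‖t k ω‖ ^ 2 : ℝ) : ℂ) * t k ω) μ := by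
        have := (htind.indepFun hnk).comp mconj
          ((Complex.measurable_ofReal.comp
            ((continuous_norm : Continuous fun z : ℂ => ‖z‖).measurable.pow_const 2)).mul measurable_id)
        exact this
      have hmul := hindXY.integral_mul_complex hX hY
      have hptwise : ∀ ω, ((‖t k ω‖ ^ 2 : ℝ) : ℂ) * (conj (t n ω) * t k ω)
          = conj (t n ω) * (((‖t k ω‖ ^ 2 : ℝ) : ℂ) * t k ω) := fun ω => by ring
      constructor
      · refine (hindXY.integrable_mul hX hY).congr ?_
        filter_upwards with ω
        exact (hptwise ω).symm
      · rw [integral_congr_ae (Filter.Eventually.of_forall hptwise), hmul]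
        have : (∫ ω, conj (t n ω) ∂μ) = 0 := by
          rw [integral_conj, htmean n, map_zero]
        rw [this, zero_mul]
    · -- k ≠ m : group (|t k|^2 * conj (t n)) and t m
      have hX : Integrable (fun ω => ((‖t k ω‖ ^ 2 : ℝ) : ℂ) * conj (t n ω)) μ := by
        by_cases hkn : k = n
        · subst hkn
          exact hcube k (fun z => conj z) mconj (fun z => by simp)
        · have hik : IndepFun (fun ω => ((‖t k ω‖ ^ 2 : ℝ) : ℂ))
              (fun ω => conj (t n ω)) μ :=
            (htind.indepFun hkn).comp
              (Complex.measurable_ofReal.comp ((continuous_norm : Continuous fun z : ℂ => ‖z‖).measurable.pow_const 2))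
              mconj
          exact hik.integrable_mul (habs2 k) (htconj n)
      have hY : Integrable (t m) μ := hti m
      have hindXY : IndepFun (fun ω => ((‖t k ω‖ ^ 2 : ℝ) : ℂ) * conj (t n ω))
          (t m) μ := by
        have hpair : IndepFun (fun ω => (t k ω, t n ω)) (t m) μ :=
          htind.indepFun_prodMk htm k n m hkm hnm
        have := hpair.comp
          (φ := fun p : ℂ × ℂ => ((‖p.1‖ ^ 2 : ℝ) : ℂ) * conj p.2)
          (ψ := id)
          ((Complex.measurable_ofReal.comp
            (((continuous_norm : Continuous fun z : ℂ => ‖z‖).measurable.comp measurable_fst).pow_const 2)).mul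
            (mconj.comp measurable_snd)) measurable_id
        exact this
      have hmul := hindXY.integral_mul_complex hX hY
      have hptwise : ∀ ω, ((‖t k ω‖ ^ 2 : ℝ) : ℂ) * (conj (t n ω) * t m ω)
          = (((‖t k ω‖ ^ 2 : ℝ) : ℂ) * conj (t n ω)) * t m ω := fun ω => by ring
      constructor
      · refine (hindXY.integrable_mul hX hY).congr ?_
        filter_upwards with ω
        exact (hptwise ω).symm
      · rw [integral_congr_ae (Filter.Eventually.of_forall hptwise), hmul, htmean m, mul_zero]
  -- notation
  set C : Fin L → Fin L → ℂ := fun n m => (G τ : ℂ) * (G (τ + ((m : ℝ) - (n : ℝ)) * T) : ℂ)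
    with hC
  set A : Ω → ℂ := fun ω => ((∑ k : Fin L, ‖t k ω‖ ^ 2 : ℝ) : ℂ) * (G τ : ℂ)
    with hA
  set B : Ω → ℂ := fun ω => ∑ n : Fin L, ∑ m ∈ Finset.univ.erase n,
      t n ω * conj (t m ω) * (G (τ + ((m : ℝ) - (n : ℝ)) * T) : ℂ) with hB
  have hsae : ∀ᵐ ω ∂μ, ∀ i, s i ω = t i ω := ae_all_iff.2 fun i => hts i
  have hABae : (fun ω => χs ω * conj (χc ω)) =ᵐ[μ] fun ω => A ω * conj (B ω) := by
    filter_upwards [hsae] with ω hω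
    simp only [hχs, hχc, hA, hB, hω]
  have hCcae : χc =ᵐ[μ] B := by
    filter_upwards [hsae] with ω hω
    simp only [hχc, hB, hω]
  -- pointwise expansion
  have hpt : ∀ ω, A ω * conj (B ω) = ∑ n : Fin L, ∑ m ∈ Finset.univ.erase n, ∑ k : Fin L,
      C n m * (((‖t k ω‖ ^ 2 : ℝ) : ℂ) * (conj (t n ω) * t m ω)) := by
    intro ω
    have h1 : conj (B ω) = ∑ n : Fin L, ∑ m ∈ Finset.univ.erase n,
        conj (t n ω) * t m ω * ((G (τ + ((m : ℝ) - (n : ℝ)) * T) : ℝ) : ℂ) := by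
      simp [hB, map_sum, map_mul, Complex.conj_ofReal]
    rw [h1, hA, Finset.mul_sum]
    refine Finset.sum_congr rfl fun n _ => ?_
    rw [Finset.mul_sum]
    refine Finset.sum_congr rfl fun m _ => ?_
    rw [hC]
    push_cast
    rw [Finset.sum_mul, Finset.sum_mul]
    refine Finset.sum_congr rfl fun k _ => ?_
    ring
  -- the main vanishing integral
  have hzero : (∫ ω, A ω * conj (B ω) ∂μ) = 0 := by
    rw [integral_congr_ae (Filter.Eventually.of_forall hpt)]
    rw [integral_finset_sum _ (fun n _ => integrable_finset_sum _ (fun m hm =>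
      integrable_finset_sum _ (fun k _ =>
        ((key k n m (Finset.mem_erase.mp hm).1.symm).1.const_mul _))))]
    refine Finset.sum_eq_zero fun n _ => ?_
    rw [integral_finset_sum _ (fun m hm => integrable_finset_sum _ (fun k _ =>
      ((key k n m (Finset.mem_erase.mp hm).1.symm).1.const_mul _)))]
    refine Finset.sum_eq_zero fun m hm => ?_
    rw [integral_finset_sum _ (fun k _ =>
      ((key k n m (Finset.mem_erase.mp hm).1.symm).1.const_mul _))]
    refine Finset.sum_eq_zero fun k _ => ?_
    rw [integral_const_mul, (key k n m (Finset.mem_erase.mp hm).1.symm).2, mul_zero]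
  have hfirst : (∫ ω, χs ω * conj (χc ω) ∂μ) = 0 := by
    rw [integral_congr_ae hABae, hzero]
  refine ⟨hfirst, ?_⟩
  -- E[χc] = 0
  have hBint : ∀ n m : Fin L, n ≠ m → Integrable (fun ω => t n ω * conj (t m ω)) μ :=
    fun n m hne => ((htind.indepFun hne).comp measurable_id mconj).integrable_mul
      (hti n) (htconj m)
  have hBzero : (∫ ω, B ω ∂μ) = 0 := by
    rw [hB, integral_finset_sum _ (fun n _ => integrable_finset_sum _ (fun m hm =>
      (hBint n m (Finset.mem_erase.mp hm).1.symm).mul_const _))]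
    refine Finset.sum_eq_zero fun n _ => ?_
    rw [integral_finset_sum _ (fun m hm =>
      (hBint n m (Finset.mem_erase.mp hm).1.symm).mul_const _)]
    refine Finset.sum_eq_zero fun m hm => ?_
    rw [integral_mul_const]
    have hne : n ≠ m := (Finset.mem_erase.mp hm).1.symm
    have h2 : (∫ ω, t n ω * conj (t m ω) ∂μ) = (∫ ω, t n ω ∂μ) * ∫ ω, conj (t m ω) ∂μ :=
      ((htind.indepFun hne).comp measurable_id mconj).integral_mul_complex (hti n) (htconj m)
    rw [h2, htmean n, zero_mul, zero_mul]
  have hχczero : (∫ ω, χc ω ∂μ) = 0 := by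
    rw [integral_congr_ae hCcae, hBzero]
  rw [hχczero, map_zero, mul_zero, hfirst]
end

section
/- Let L ≥ 1, T > 0, let g : ℝ → ℝ be square-integrable with autocorrelation G(τ) = ∫_ℝ g(t) g(t − τ) dt, and let s_0, …, s_{L−1} be mutually independent complex random variables with E[s_n] = 0, E[s_n²] = 0, E[|s_n|²] = 1, and E[|s_n|⁴] < ∞ for all n. Define χ_c(τ) = Σ_{n=0}^{L−1} Σ_{m=0, m≠n}^{L−1} s_n · conj(s_m) · G(τ + (m − n)T). Then for every τ ∈ ℝ, Var(χ_c(τ)) = Σ_{n∈ℤ, 1 ≤ |n| ≤ L−1} (L − |n|) · G(τ + nT)². -/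
open MeasureTheory ProbabilityTheory Complex Finset
open scoped ComplexConjugate ENNReal

section Aux

variable {Ω : Type*} [MeasurableSpace Ω] {μ : Measure Ω}

lemma aux_iIndepFun_ae_eq {ι : Type*} {β : ι → Type*}
    [m : ∀ i, MeasurableSpace (β i)] {f f' : ∀ i, Ω → β i}
    (hf : iIndepFun f μ) (h : ∀ i, f i =ᵐ[μ] f' i) : iIndepFun f' μ := by
  rw [iIndepFun_iff_measure_inter_preimage_eq_mul] at hf ⊢
  intro S sets hsets
  have hall : ∀ᵐ ω ∂μ, ∀ i ∈ S, f i ω = f' i ω :=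
    (Filter.eventually_all_finite S.finite_toSet).2 (fun i _ => h i)
  have h1 : (⋂ i ∈ S, f' i ⁻¹' sets i) =ᵐ[μ] (⋂ i ∈ S, f i ⁻¹' sets i) := by
    apply Filter.eventuallyEq_set.2
    filter_upwards [hall] with ω hω
    simp only [Set.mem_iInter, Set.mem_preimage]
    exact ⟨fun H i hi => by rw [hω i hi]; exact H i hi,
      fun H i hi => by rw [← hω i hi]; exact H i hi⟩
  rw [measure_congr h1, hf S hsets]
  exact Finset.prod_congr rfl fun i hi => measure_congr (Filter.eventuallyEq_set.2 (by
    filter_upwards [h i] with ω hω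
    simp [Set.mem_preimage, hω]))

lemma aux_indep_integral_mul [IsProbabilityMeasure μ]
    {X Y : Ω → ℂ} (h : IndepFun X Y μ) (hX : Measurable X) (hY : Measurable Y) :
    ∫ ω, X ω * Y ω ∂μ = (∫ ω, X ω ∂μ) * ∫ ω, Y ω ∂μ := by
  rw [indepFun_iff_map_prod_eq_prod_map_map hX.aemeasurable hY.aemeasurable] at h
  have hmap : ∫ ω, X ω * Y ω ∂μ = ∫ p : ℂ × ℂ, p.1 * p.2 ∂(μ.map (fun ω => (X ω, Y ω))) := by
    rw [integral_map (hX.prodMk hY).aemeasurable]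
    exact (measurable_fst.mul measurable_snd).aestronglyMeasurable
  have h1 : ∫ (x : ℂ), x ∂(μ.map X) = ∫ ω, X ω ∂μ :=
    integral_map hX.aemeasurable measurable_id.aestronglyMeasurable
  have h2 : ∫ (x : ℂ), x ∂(μ.map Y) = ∫ ω, Y ω ∂μ :=
    integral_map hY.aemeasurable measurable_id.aestronglyMeasurable
  rw [hmap, h, integral_prod_mul (fun x : ℂ => x) (fun x : ℂ => x), h1, h2]

lemma aux_integrable_prod {ι : Type*} [IsProbabilityMeasure μ] {Y : ι → Ω → ℂ}
    (h : iIndepFun Y μ) (hm : ∀ i, Measurable (Y i))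
    (S : Finset ι) (hi : ∀ i ∈ S, Integrable (Y i) μ) :
    Integrable (fun ω => ∏ i ∈ S, Y i ω) μ := by
  classical
  induction S using Finset.induction_on with
  | empty => simp
  | @insert a S ha ih =>
    have hfun : (∏ i ∈ S, Y i) = fun ω => ∏ i ∈ S, Y i ω := funext fun ω => by simp
    have hint : Integrable (∏ i ∈ S, Y i) μ := by
      rw [hfun]; exact ih (fun i hi' => hi i (Finset.mem_insert_of_mem hi'))
    have hindep : IndepFun (∏ j ∈ S, Y j) (Y a) μ :=
      h.indepFun_finsetProd_of_notMem hm ha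
    have := (hindep.symm).integrable_mul (hi a (Finset.mem_insert_self a S)) hint
    rw [hfun] at this
    simp only [Finset.prod_insert ha]
    exact this

lemma aux_integral_prod {ι : Type*} [IsProbabilityMeasure μ] {Y : ι → Ω → ℂ}
    (h : iIndepFun Y μ) (hm : ∀ i, Measurable (Y i))
    (S : Finset ι) :
    ∫ ω, ∏ i ∈ S, Y i ω ∂μ = ∏ i ∈ S, ∫ ω, Y i ω ∂μ := by
  classical
  induction S using Finset.induction_on with
  | empty => simp
  | @insert a S ha ih =>
    have hindep : IndepFun (Y a) (∏ j ∈ S, Y j) μ :=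
      (h.indepFun_finsetProd_of_notMem hm ha).symm
    have hmP : Measurable (fun ω => ∏ j ∈ S, Y j ω) := by
      apply Finset.measurable_prod
      exact fun i _ => hm i
    have hfun : (∏ i ∈ S, Y i) = fun ω => ∏ i ∈ S, Y i ω := funext fun ω => by simp
    rw [hfun] at hindep
    have := aux_indep_integral_mul (μ := μ) hindep (hm a) hmP
    simp only [Finset.prod_insert ha]
    rw [← ih, ← this]

lemma aux_key {ι : Type*} [DecidableEq ι] [IsProbabilityMeasure μ] {s : ι → Ω → ℂ}
    (hind : iIndepFun s μ)
    (hms : ∀ i, Measurable (s i))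
    (hmean : ∀ i, ∫ ω, s i ω ∂μ = 0)
    (hsq : ∀ i, ∫ ω, (s i ω) ^ 2 ∂μ = 0)
    (h2 : ∀ i, ∫ ω, ‖s i ω‖ ^ 2 ∂μ = 1)
    {n m p q : ι} (hnm : n ≠ m) (hpq : p ≠ q) :
    ∫ ω, s n ω * conj (s m ω) * (conj (s p ω) * s q ω) ∂μ =
      if p = n ∧ q = m then 1 else 0 := by
  classical
  set a : ι → ℕ := fun j => (if j = n then 1 else 0) + (if j = q then 1 else 0) with ha
  set b : ι → ℕ := fun j => (if j = m then 1 else 0) + (if j = p then 1 else 0) with hb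
  set Y : ι → Ω → ℂ := fun j => (fun z => z ^ a j * (conj z) ^ b j) ∘ s j with hY
  set S : Finset ι := {n, m, p, q} with hS
  have hconj : Measurable (fun z : ℂ => conj z) := Complex.continuous_conj.measurable
  have hYmeas : ∀ j, Measurable (Y j) :=
    fun j => ((hms j).pow_const _).mul ((hconj.comp (hms j)).pow_const _)
  have hYind : iIndepFun Y μ :=
    hind.comp (fun j z => z ^ a j * (conj z) ^ b j)
      (fun j => (measurable_id.pow_const _).mul (hconj.pow_const _))
  have hpow : ∀ (x : ι → ℂ) (i k : ι), i ∈ S → k ∈ S →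
      ∏ j ∈ S, x j ^ ((if j = i then 1 else 0) + (if j = k then 1 else 0)) = x i * x k := by
    intro x i k hi hk
    simp only [pow_add, Finset.prod_mul_distrib]
    have e1 : ∀ (i : ι), i ∈ S → ∏ j ∈ S, x j ^ (if j = i then 1 else 0) = x i := by
      intro i hi
      have : ∀ j, x j ^ (if j = i then 1 else 0) = (if j = i then x j else 1) := by
        intro j; split_ifs <;> simp
      rw [Finset.prod_congr rfl (fun j _ => this j), Finset.prod_ite_eq' S i x, if_pos hi]
    rw [e1 i hi, e1 k hk]
  have hprod : ∀ ω, s n ω * conj (s m ω) * (conj (s p ω) * s q ω) = ∏ j ∈ S, Y j ω := by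
    intro ω
    have h1 : ∏ j ∈ S, Y j ω =
        (∏ j ∈ S, s j ω ^ a j) * ∏ j ∈ S, (conj (s j ω)) ^ b j := by
      simp [hY, Finset.prod_mul_distrib]
    rw [h1, hpow (fun j => s j ω) n q (by simp [hS]) (by simp [hS]),
      hpow (fun j => conj (s j ω)) m p (by simp [hS]) (by simp [hS])]
    ring
  rw [show (fun ω => s n ω * conj (s m ω) * (conj (s p ω) * s q ω))
      = fun ω => ∏ j ∈ S, Y j ω from funext hprod,
    aux_integral_prod hYind hYmeas S]
  have habs : ∀ j, ∫ ω, s j ω * conj (s j ω) ∂μ = 1 := by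
    intro j
    have heq : ∀ ω, s j ω * conj (s j ω) = ((‖s j ω‖ ^ 2 : ℝ) : ℂ) := by
      intro ω; rw [Complex.mul_conj, Complex.normSq_eq_norm_sq]
    have h3 : ∫ ω, ((‖s j ω‖ ^ 2 : ℝ) : ℂ) ∂μ
        = ((∫ ω, ‖s j ω‖ ^ 2 ∂μ : ℝ) : ℂ) := integral_ofReal
    rw [show (fun ω => s j ω * conj (s j ω)) = fun ω => ((‖s j ω‖ ^ 2 : ℝ) : ℂ)
      from funext heq, h3, h2 j]
    norm_num
  have hconj0 : ∀ j, ∫ ω, conj (s j ω) ∂μ = 0 := by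
    intro j
    rw [integral_conj, hmean j, map_zero]
  by_cases hp : p = n
  · by_cases hq : q = m
    · rw [if_pos ⟨hp, hq⟩]
      have hSeq : S = {n, m} := by
        rw [hS, hp, hq]
        ext j; by_cases h1 : j = n <;> by_cases h2 : j = m <;> simp [h1, h2]
      have han : a n = 1 := by simp [ha, hq, hnm]
      have hbn : b n = 1 := by simp [hb, hp, hnm]
      have ham : a m = 1 := by simp [ha, hq, Ne.symm hnm]
      have hbm : b m = 1 := by simp [hb, hp, Ne.symm hnm]
      rw [hSeq, Finset.prod_insert (by simp [hnm]), Finset.prod_singleton]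
      have hYn : ∫ ω, Y n ω ∂μ = 1 := by
        simp only [hY, Function.comp, han, hbn, pow_one]
        exact habs n
      have hYm : ∫ ω, Y m ω ∂μ = 1 := by
        simp only [hY, Function.comp, ham, hbm, pow_one]
        exact habs m
      rw [hYn, hYm]; norm_num
    · rw [if_neg (by rintro ⟨h1', h2'⟩; exact hq h2')]
      apply Finset.prod_eq_zero (show m ∈ S by simp [hS])
      have hmq : ¬ m = q := fun h => hq h.symm
      have ham : a m = 0 := by simp [ha, Ne.symm hnm, hmq]
      have hmp : ¬ m = p := by rw [hp]; exact Ne.symm hnm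
      have hbm : b m = 1 := by simp [hb, hmp]
      simp only [hY, Function.comp, ham, hbm, pow_zero, pow_one, one_mul]
      exact hconj0 m
  · rw [if_neg (by rintro ⟨h1', h2'⟩; exact hp h1')]
    apply Finset.prod_eq_zero (show n ∈ S by simp [hS])
    have hnp : ¬ n = p := fun h => hp h.symm
    have hbn : b n = 0 := by simp [hb, hnm, hnp]
    by_cases hq : n = q
    · have han : a n = 2 := by simp [ha, hq]
      simp only [hY, Function.comp, han, hbn, pow_zero, mul_one]
      exact hsq n
    · have han : a n = 1 := by simp [ha, hq]
      simp only [hY, Function.comp, han, hbn, pow_zero, mul_one, pow_one]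
      exact hmean n

lemma aux_int4 {ι : Type*} [DecidableEq ι] [IsProbabilityMeasure μ] {s : ι → Ω → ℂ}
    (hind : iIndepFun s μ)
    (hms : ∀ i, Measurable (s i))
    (hmem : ∀ i, MemLp (s i) 4 μ)
    (n m p q : ι) :
    Integrable (fun ω => s n ω * conj (s m ω) * (conj (s p ω) * s q ω)) μ := by
  classical
  set a : ι → ℕ := fun j => (if j = n then 1 else 0) + (if j = q then 1 else 0) with ha
  set b : ι → ℕ := fun j => (if j = m then 1 else 0) + (if j = p then 1 else 0) with hb
  set Y : ι → Ω → ℂ := fun j => (fun z => z ^ a j * (conj z) ^ b j) ∘ s j with hY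
  set S : Finset ι := {n, m, p, q} with hS
  have hconj : Measurable (fun z : ℂ => conj z) := Complex.continuous_conj.measurable
  have hYmeas : ∀ j, Measurable (Y j) :=
    fun j => ((hms j).pow_const _).mul ((hconj.comp (hms j)).pow_const _)
  have hYind : iIndepFun Y μ :=
    hind.comp (fun j z => z ^ a j * (conj z) ^ b j)
      (fun j => (measurable_id.pow_const _).mul (hconj.pow_const _))
  have hbound : ∀ (x : ℝ), 0 ≤ x → ∀ k : ℕ, k ≤ 4 → x ^ k ≤ 1 + x ^ 4 := by
    intro x hx k hk
    rcases le_total x 1 with h1 | h1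
    · calc x ^ k ≤ 1 := pow_le_one₀ hx h1
        _ ≤ 1 + x ^ 4 := le_add_of_nonneg_right (by positivity)
    · calc x ^ k ≤ x ^ 4 := pow_le_pow_right₀ h1 hk
        _ ≤ 1 + x ^ 4 := le_add_of_nonneg_left zero_le_one
  have hYint : ∀ j, Integrable (Y j) μ := by
    intro j
    have h4 : Integrable (fun ω => ‖s j ω‖ ^ (4 : ℕ)) μ := by
      have := (hmem j).integrable_norm_rpow (by norm_num) (by norm_num)
      have h44 : ((4 : ℝ≥0∞)).toReal = ((4 : ℕ) : ℝ) := by norm_num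
      rw [show (fun ω => ‖s j ω‖ ^ (4:ℕ)) = fun ω => ‖s j ω‖ ^ ((4:ℕ):ℝ) from
        funext fun ω => (Real.rpow_natCast _ _).symm]
      simpa [h44] using this
    refine Integrable.mono' ((integrable_const 1).add h4) (hYmeas j).aestronglyMeasurable ?_
    filter_upwards with ω
    have hab : a j + b j ≤ 4 := by
      simp only [ha, hb]
      split_ifs <;> norm_num
    have hnorm : ‖Y j ω‖ = ‖s j ω‖ ^ (a j + b j) := by
      simp [hY, Function.comp, norm_mul, norm_pow, pow_add, RCLike.norm_conj]
    rw [hnorm]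
    exact hbound _ (norm_nonneg _) _ hab
  have hprodint := aux_integrable_prod hYind hYmeas S (fun i _ => hYint i)
  have hpow : ∀ (x : ι → ℂ) (i k : ι), i ∈ S → k ∈ S →
      ∏ j ∈ S, x j ^ ((if j = i then 1 else 0) + (if j = k then 1 else 0)) = x i * x k := by
    intro x i k hi hk
    simp only [pow_add, Finset.prod_mul_distrib]
    have e1 : ∀ (i : ι), i ∈ S → ∏ j ∈ S, x j ^ (if j = i then 1 else 0) = x i := by
      intro i hi
      have : ∀ j, x j ^ (if j = i then 1 else 0) = (if j = i then x j else 1) := by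
        intro j; split_ifs <;> simp
      rw [Finset.prod_congr rfl (fun j _ => this j), Finset.prod_ite_eq' S i x, if_pos hi]
    rw [e1 i hi, e1 k hk]
  have hprod : ∀ ω, s n ω * conj (s m ω) * (conj (s p ω) * s q ω) = ∏ j ∈ S, Y j ω := by
    intro ω
    have h1 : ∏ j ∈ S, Y j ω =
        (∏ j ∈ S, s j ω ^ a j) * ∏ j ∈ S, (conj (s j ω)) ^ b j := by
      simp [hY, Finset.prod_mul_distrib]
    rw [h1, hpow (fun j => s j ω) n q (by simp [hS]) (by simp [hS]),
      hpow (fun j => conj (s j ω)) m p (by simp [hS]) (by simp [hS])]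
    ring
  rw [show (fun ω => s n ω * conj (s m ω) * (conj (s p ω) * s q ω))
      = fun ω => ∏ j ∈ S, Y j ω from funext hprod]
  exact hprodint

lemma aux_int2 {ι : Type*} [IsProbabilityMeasure μ] {s : ι → Ω → ℂ}
    (hind : iIndepFun s μ)
    (hms : ∀ i, Measurable (s i))
    (hmem : ∀ i, MemLp (s i) 4 μ)
    {n m : ι} (hnm : n ≠ m) :
    Integrable (fun ω => s n ω * conj (s m ω)) μ := by
  have hconj : Measurable (fun z : ℂ => conj z) := Complex.continuous_conj.measurable
  have h1 : Integrable (s n) μ := (hmem n).integrable (by norm_num)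
  have h2 : Integrable (fun ω => conj (s m ω)) μ := by
    have hsm : Integrable (s m) μ := (hmem m).integrable (by norm_num)
    refine Integrable.mono' hsm.norm ((hconj.comp (hms m)).aestronglyMeasurable) ?_
    filter_upwards with ω
    simp [RCLike.norm_conj]
  have hindep : IndepFun (s n) (fun ω => conj (s m ω)) μ :=
    (hind.indepFun hnm).comp measurable_id hconj
  exact hindep.integrable_mul h1 h2

lemma aux_count (L : ℕ) (f : ℤ → ℝ) :
    ∑ n : Fin L, ∑ m ∈ Finset.univ.erase n, f ((m : ℤ) - (n : ℤ)) =
    ∑ k ∈ (Finset.Icc (-(L : ℤ) + 1) ((L : ℤ) - 1)).erase 0, ((L : ℝ) - |(k : ℝ)|) * f k := by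
  classical
  set K := (Finset.Icc (-(L : ℤ) + 1) ((L : ℤ) - 1)).erase 0 with hK
  set P : Finset (Fin L × Fin L) := Finset.univ.filter (fun p => p.1 ≠ p.2) with hP
  have step1 : ∑ n : Fin L, ∑ m ∈ Finset.univ.erase n, f ((m : ℤ) - (n : ℤ))
      = ∑ p ∈ P, f ((p.2 : ℤ) - (p.1 : ℤ)) := by
    rw [hP, Finset.sum_filter, ← Finset.univ_product_univ, Finset.sum_product]
    apply Finset.sum_congr rfl
    intro n _
    rw [← Finset.filter_ne' Finset.univ n, Finset.sum_filter]
    apply Finset.sum_congr rfl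
    intro m _
    by_cases h : m = n <;> simp [h, Ne.symm]
  have hmaps : ∀ p ∈ P, (p.2 : ℤ) - (p.1 : ℤ) ∈ K := by
    intro p hp
    rw [hP, Finset.mem_filter] at hp
    have h1 : (p.1 : ℕ) < L := p.1.isLt
    have h2 : (p.2 : ℕ) < L := p.2.isLt
    have hne : (p.1 : ℕ) ≠ (p.2 : ℕ) := fun h => hp.2 (Fin.ext h)
    rw [hK, Finset.mem_erase, Finset.mem_Icc]
    omega
  have step2 : ∑ p ∈ P, f ((p.2 : ℤ) - (p.1 : ℤ))
      = ∑ k ∈ K, ∑ p ∈ P.filter (fun p => (p.2 : ℤ) - (p.1 : ℤ) = k),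
          f ((p.2 : ℤ) - (p.1 : ℤ)) :=
    (Finset.sum_fiberwise_of_maps_to hmaps _).symm
  have hcard : ∀ k ∈ K, (P.filter (fun p => (p.2 : ℤ) - (p.1 : ℤ) = k)).card
      = L - k.natAbs := by
    intro k hk
    rw [hK, Finset.mem_erase, Finset.mem_Icc] at hk
    have hL2 : 0 < L := by omega
    have hbij : (P.filter (fun p => (p.2 : ℤ) - (p.1 : ℤ) = k)).card
        = (Finset.Ico (max 0 (-k)) (min (L : ℤ) ((L : ℤ) - k))).card := by
      apply Finset.card_nbij' (i := fun p : Fin L × Fin L => ((p.1 : ℕ) : ℤ))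
        (j := fun x => (if h : x.toNat < L then (⟨x.toNat, h⟩ : Fin L) else ⟨0, hL2⟩,
          if h : (x + k).toNat < L then (⟨(x + k).toNat, h⟩ : Fin L) else ⟨0, hL2⟩))
      · intro p hp
        simp only [Finset.mem_coe, Finset.mem_filter, hP, Finset.mem_filter, Finset.mem_univ, true_and] at hp
        have h1 : (p.1 : ℕ) < L := p.1.isLt
        have h2 : (p.2 : ℕ) < L := p.2.isLt
        have hd := hp.2
        beta_reduce
        rw [Finset.mem_coe, Finset.mem_Ico]; constructor
        · apply sup_le_iff.2; constructor <;> omega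
        · apply lt_inf_iff.2; constructor <;> omega
      · intro x hx
        rw [Finset.mem_coe, Finset.mem_Ico, sup_le_iff, lt_inf_iff] at hx
        have e1 : x.toNat < L := by omega
        have e2 : (x + k).toNat < L := by omega
        beta_reduce
        rw [dif_pos e1, dif_pos e2]
        simp only [Finset.mem_coe, Finset.mem_filter, hP, Finset.mem_filter, Finset.mem_univ, true_and]
        refine ⟨fun h => ?_, ?_⟩
        · have h1 : x.toNat = (x + k).toNat := congrArg Fin.val h
          omega
        · show (((x + k).toNat : ℕ) : ℤ) - ((x.toNat : ℕ) : ℤ) = k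
          omega
      · intro p hp
        simp only [Finset.mem_coe, Finset.mem_filter, hP, Finset.mem_filter, Finset.mem_univ, true_and] at hp
        have h1 : (p.1 : ℕ) < L := p.1.isLt
        have h2 : (p.2 : ℕ) < L := p.2.isLt
        have hd := hp.2
        have e1 : ((p.1 : ℕ) : ℤ).toNat < L := by omega
        have e2 : (((p.1 : ℕ) : ℤ) + k).toNat < L := by omega
        beta_reduce
        rw [dif_pos e1, dif_pos e2, Prod.ext_iff]
        constructor
        · apply Fin.ext
          show ((p.1 : ℕ) : ℤ).toNat = (p.1 : ℕ)
          omega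
        · apply Fin.ext
          show (((p.1 : ℕ) : ℤ) + k).toNat = (p.2 : ℕ)
          omega
      · intro x hx
        rw [Finset.mem_coe, Finset.mem_Ico, sup_le_iff, lt_inf_iff] at hx
        have e1 : x.toNat < L := by omega
        beta_reduce
        rw [dif_pos e1]
        show ((x.toNat : ℕ) : ℤ) = x
        omega
    rw [hbij, Int.card_Ico]
    rcases le_total 0 k with h | h
    · rw [sup_eq_left.2 (by omega : -k ≤ 0), inf_eq_right.2 (by omega : (L:ℤ) - k ≤ (L:ℤ))]
      omega
    · rw [sup_eq_right.2 (by omega : (0:ℤ) ≤ -k), inf_eq_left.2 (by omega : (L:ℤ) ≤ (L:ℤ) - k)]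
      omega
  rw [step1, step2]
  apply Finset.sum_congr rfl
  intro k hk
  have hcg : ∀ p ∈ P.filter (fun p => (p.2 : ℤ) - (p.1 : ℤ) = k),
      f ((p.2 : ℤ) - (p.1 : ℤ)) = f k := by
    intro p hp
    rw [Finset.mem_filter] at hp
    rw [hp.2]
  rw [Finset.sum_congr rfl hcg, Finset.sum_const, hcard k hk, nsmul_eq_mul]
  congr 1
  rw [hK, Finset.mem_erase, Finset.mem_Icc] at hk
  have h1 : k.natAbs ≤ L := by omega
  rw [Nat.cast_sub h1]
  congr 1
  rw [Nat.cast_natAbs (α := ℝ), Int.cast_abs]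

end Aux

/-- Variance of the cross-ambiguity part:
`Var(χ_c(τ)) = Σ_{1 ≤ |k| ≤ L−1} (L − |k|) G(τ + kT)²`, where the variance of a complex
random variable `X` is `E[|X|²] − |E[X]|²`. -/
theorem statement_5 {Ω : Type*} [MeasurableSpace Ω] (μ : Measure Ω) [IsProbabilityMeasure μ]
    (L : ℕ) (hL : 1 ≤ L) (T : ℝ) (hT : 0 < T)
    (g : ℝ → ℝ) (hg : MemLp g 2 (volume : Measure ℝ))
    (G : ℝ → ℝ) (hG : ∀ τ, G τ = ∫ t : ℝ, g t * g (t - τ))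
    (s : Fin L → Ω → ℂ)
    (hind : iIndepFun s μ)
    (hmem : ∀ n, MemLp (s n) 4 μ)
    (hmean : ∀ n, ∫ ω, s n ω ∂μ = 0)
    (hsq : ∀ n, ∫ ω, (s n ω) ^ 2 ∂μ = 0)
    (h2 : ∀ n, ∫ ω, ‖s n ω‖ ^ 2 ∂μ = 1)
    (τ : ℝ)
    (χc : Ω → ℂ)
    (hχc : χc = fun ω => ∑ n : Fin L, ∑ m ∈ Finset.univ.erase n,
        s n ω * conj (s m ω) * (G (τ + ((m : ℝ) - (n : ℝ)) * T) : ℂ)) :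
    (∫ ω, ‖χc ω‖ ^ 2 ∂μ) - ‖∫ ω, χc ω ∂μ‖ ^ 2 =
      ∑ k ∈ (Finset.Icc (-(L : ℤ) + 1) ((L : ℤ) - 1)).erase 0,
        ((L : ℝ) - |(k : ℝ)|) * G (τ + (k : ℝ) * T) ^ 2 := by
  classical
  -- measurable versions
  set s' : Fin L → Ω → ℂ := fun i => ((hmem i).aestronglyMeasurable).mk (s i) with hs'def
  have heq : ∀ i, s i =ᵐ[μ] s' i := fun i => (hmem i).aestronglyMeasurable.ae_eq_mk
  have hs' : ∀ i, Measurable (s' i) :=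
    fun i => ((hmem i).aestronglyMeasurable.stronglyMeasurable_mk).measurable
  have hind' : iIndepFun s' μ := aux_iIndepFun_ae_eq hind heq
  have hmem' : ∀ i, MemLp (s' i) 4 μ := fun i => (hmem i).ae_eq (heq i)
  have hmean' : ∀ i, ∫ ω, s' i ω ∂μ = 0 :=
    fun i => (integral_congr_ae (heq i)).symm.trans (hmean i)
  have hsq' : ∀ i, ∫ ω, (s' i ω) ^ 2 ∂μ = 0 := by
    intro i
    rw [← hsq i]
    apply integral_congr_ae
    filter_upwards [heq i] with ω hω
    rw [hω]
  have h2' : ∀ i, ∫ ω, ‖s' i ω‖ ^ 2 ∂μ = 1 := by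
    intro i
    rw [← h2 i]
    apply integral_congr_ae
    filter_upwards [heq i] with ω hω
    rw [hω]
  set c : Fin L → Fin L → ℂ :=
    fun n m => ((G (τ + ((m : ℝ) - (n : ℝ)) * T) : ℝ) : ℂ) with hc
  set χ : Ω → ℂ := fun ω => ∑ n : Fin L, ∑ m ∈ Finset.univ.erase n,
      s' n ω * conj (s' m ω) * c n m with hχdef
  have hae : χc =ᵐ[μ] χ := by
    have hall : ∀ᵐ ω ∂μ, ∀ i, s i ω = s' i ω := (MeasureTheory.ae_all_iff).2 heq
    filter_upwards [hall] with ω hω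
    rw [hχc, hχdef]
    apply Finset.sum_congr rfl
    intro n _
    apply Finset.sum_congr rfl
    intro m _
    rw [hω n, hω m]
  -- mean is zero
  have hconjM : Measurable (fun z : ℂ => conj z) := Complex.continuous_conj.measurable
  have hmul0 : ∀ n m : Fin L, n ≠ m → ∫ ω, s' n ω * conj (s' m ω) ∂μ = 0 := by
    intro n m hnm
    have hindep : IndepFun (s' n) (fun ω => conj (s' m ω)) μ :=
      (hind'.indepFun hnm).comp measurable_id hconjM
    rw [aux_indep_integral_mul hindep (hs' n) (hconjM.comp (hs' m)), hmean' n, zero_mul]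
  have hint2 : ∀ n m : Fin L, n ≠ m →
      Integrable (fun ω => s' n ω * conj (s' m ω) * c n m) μ :=
    fun n m hnm => (aux_int2 hind' hs' hmem' hnm).mul_const _
  have hmean0 : ∫ ω, χ ω ∂μ = 0 := by
    rw [hχdef]
    rw [integral_finset_sum _ (fun n _ => integrable_finset_sum _
      (fun m hm => hint2 n m (Ne.symm (Finset.mem_erase.1 hm).1)))]
    apply Finset.sum_eq_zero
    intro n _
    rw [integral_finset_sum _ (fun m hm => hint2 n m (Ne.symm (Finset.mem_erase.1 hm).1))]
    apply Finset.sum_eq_zero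
    intro m hm
    rw [integral_mul_const, hmul0 n m (Ne.symm (Finset.mem_erase.1 hm).1), zero_mul]
  -- second moment
  have hexpand : ∀ ω, χ ω * conj (χ ω) =
      ∑ n : Fin L, ∑ m ∈ Finset.univ.erase n, ∑ p : Fin L, ∑ q ∈ Finset.univ.erase p,
        (c p q * conj (c n m)) * (s' p ω * conj (s' q ω) * (conj (s' n ω) * s' m ω)) := by
    intro ω
    rw [hχdef]
    simp only [map_sum, Finset.sum_mul, Finset.mul_sum]
    apply Finset.sum_congr rfl; intro n _
    apply Finset.sum_congr rfl; intro m _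
    apply Finset.sum_congr rfl; intro p _
    apply Finset.sum_congr rfl; intro q _
    simp only [map_mul, Complex.conj_conj]
    ring
  have hint4 : ∀ (n m p q : Fin L), Integrable (fun ω =>
      (c p q * conj (c n m)) * (s' p ω * conj (s' q ω) * (conj (s' n ω) * s' m ω))) μ :=
    fun n m p q => (aux_int4 hind' hs' hmem' p q n m).const_mul _
  have hsecond : ∫ ω, χ ω * conj (χ ω) ∂μ =
      ((∑ n : Fin L, ∑ m ∈ Finset.univ.erase n,
        G (τ + ((m : ℝ) - (n : ℝ)) * T) ^ 2 : ℝ) : ℂ) := by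
    rw [show (fun ω => χ ω * conj (χ ω)) = fun ω =>
      ∑ n : Fin L, ∑ m ∈ Finset.univ.erase n, ∑ p : Fin L, ∑ q ∈ Finset.univ.erase p,
        (c p q * conj (c n m)) * (s' p ω * conj (s' q ω) * (conj (s' n ω) * s' m ω))
      from funext hexpand]
    rw [integral_finset_sum _ (fun n _ => integrable_finset_sum _ (fun m _ =>
      integrable_finset_sum _ (fun p _ => integrable_finset_sum _ (fun q _ =>
        hint4 n m p q))))]
    push_cast
    apply Finset.sum_congr rfl; intro n _
    rw [integral_finset_sum _ (fun m _ => integrable_finset_sum _ (fun p _ =>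
      integrable_finset_sum _ (fun q _ => hint4 n m p q)))]
    apply Finset.sum_congr rfl; intro m hm
    rw [integral_finset_sum _ (fun p _ => integrable_finset_sum _ (fun q _ =>
      hint4 n m p q))]
    have hval : ∀ p, p ∈ (Finset.univ : Finset (Fin L)) →
        ∫ ω, ∑ q ∈ Finset.univ.erase p,
          (c p q * conj (c n m)) * (s' p ω * conj (s' q ω) * (conj (s' n ω) * s' m ω)) ∂μ
        = ∑ q ∈ Finset.univ.erase p, (c p q * conj (c n m)) *
            (if n = p ∧ m = q then 1 else 0) := by
      intro p _
      rw [integral_finset_sum _ (fun q _ => hint4 n m p q)]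
      apply Finset.sum_congr rfl
      intro q hq
      rw [integral_const_mul, aux_key hind' hs' hmean' hsq' h2'
        (Ne.symm (Finset.mem_erase.1 hq).1) (Ne.symm (Finset.mem_erase.1 hm).1)]
    rw [Finset.sum_congr rfl hval]
    -- collapse the double sum
    have hcollapse : ∑ p : Fin L, ∑ q ∈ Finset.univ.erase p, (c p q * conj (c n m)) *
        (if n = p ∧ m = q then 1 else 0) = c n m * conj (c n m) := by
      rw [Finset.sum_eq_single n]
      · rw [Finset.sum_eq_single m]
        · simp
        · intro q hq hqm
          have : ¬ m = q := fun h => hqm h.symm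
          simp [this]
        · intro hmem''
          exact absurd (Finset.mem_erase.2 ⟨(Finset.mem_erase.1 hm).1, Finset.mem_univ m⟩) hmem''
      · intro p _ hpn
        apply Finset.sum_eq_zero
        intro q _
        have : ¬ n = p := fun h => hpn h.symm
        simp [this]
      · intro hn
        exact absurd (Finset.mem_univ n) hn
    rw [hcollapse, hc]
    rw [Complex.conj_ofReal]
    push_cast
    ring
  -- relate to |χ|²
  have habs2 : ∫ ω, ‖χ ω‖ ^ 2 ∂μ =
      ∑ n : Fin L, ∑ m ∈ Finset.univ.erase n, G (τ + ((m : ℝ) - (n : ℝ)) * T) ^ 2 := by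
    have hpt : ∀ ω, χ ω * conj (χ ω) = ((‖χ ω‖ ^ 2 : ℝ) : ℂ) := by
      intro ω; rw [Complex.mul_conj, Complex.normSq_eq_norm_sq]
    have h3 : ∫ ω, ((‖χ ω‖ ^ 2 : ℝ) : ℂ) ∂μ
        = ((∫ ω, ‖χ ω‖ ^ 2 ∂μ : ℝ) : ℂ) := integral_ofReal
    have := hsecond
    rw [show (fun ω => χ ω * conj (χ ω)) = fun ω => ((‖χ ω‖ ^ 2 : ℝ) : ℂ)
      from funext hpt, h3] at this
    exact_mod_cast this
  -- put everything together
  have e1 : ∫ ω, ‖χc ω‖ ^ 2 ∂μ = ∫ ω, ‖χ ω‖ ^ 2 ∂μ := by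
    apply integral_congr_ae
    filter_upwards [hae] with ω hω
    rw [hω]
  have e2 : ∫ ω, χc ω ∂μ = ∫ ω, χ ω ∂μ := integral_congr_ae hae
  rw [e1, e2, hmean0, habs2, show ‖(0 : ℂ)‖ ^ 2 = 0 by simp, sub_zero]
  rw [show (∑ n : Fin L, ∑ m ∈ Finset.univ.erase n, G (τ + ((m : ℝ) - (n : ℝ)) * T) ^ 2)
      = ∑ n : Fin L, ∑ m ∈ Finset.univ.erase n,
          (fun k : ℤ => G (τ + (k : ℝ) * T) ^ 2) ((m : ℤ) - (n : ℤ)) from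
    Finset.sum_congr rfl fun n _ => Finset.sum_congr rfl fun m _ => by
      have hcast : τ + ((m : ℝ) - (n : ℝ)) * T = τ + ((((m : ℤ) - (n : ℤ)) : ℤ) : ℝ) * T := by
        push_cast
        ring
      simp only []
      rw [hcast]]
  exact aux_count L (fun k => G (τ + (k : ℝ) * T) ^ 2)
end
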